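/- Failure of the ordinary Whitney sum formula for the classes Q (Theorem 4.2(5) and the counterexample of Section 5): take R = ℤ[a] (a polynomial ring in one variable), F(u,v) = u + v − a·uv, a_0 = 1 and a_1 = a. Then in R⟦u⟧ one has Q_1(u,u) = 2u − a·u², Q_1(u) = u, and Q_0(u) = 1, so that Q_1(u,u) ≠ Q_1(u)·Q_0(u) + Q_0(u)·Q_1(u) = 2u. Hence the classes Q_r do not satisfy the Whitney sum formula and do not coincide with the cobordism Chern classes c_r^U. -/

import Mathlib

open Finset

variable {R : Type*} [CommRing R] {σ : Type*} [DecidableEq σ]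

/-- The power series `F(t, t_i)` viewed as a power series in `t` with coefficients in
`R⟦t_j : j ∈ σ⟧`, where `F(u,v) = ∑ c i j • u^i v^j`. -/
noncomputable def Fser (c : ℕ → ℕ → R) (i : σ) : PowerSeries (MvPowerSeries σ R) :=
  PowerSeries.mk fun p =>
    (fun d => if d = Finsupp.single i (d i) then c p (d i) else 0 : MvPowerSeries σ R)

/-- The class `Φ_r(t_i : i ∈ s)`: for `r ≤ card s` it is the coefficient of
`t^(card s - r)` in `∏_{i ∈ s} F(t, t_i)`, and `0` for `r > card s`. -/
noncomputable def PhiCl (c : ℕ → ℕ → R) (s : Finset σ) (r : ℤ) : MvPowerSeries σ R :=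
  if r ≤ (s.card : ℤ) then
    PowerSeries.coeff (R := MvPowerSeries σ R) ((s.card : ℤ) - r).toNat (∏ i ∈ s, Fser c i)
  else 0

/-- The class `Q_r(t_i : i ∈ s) = ∑_{k=0}^{card s - r} Φ_{r+k} · a_k` for `r ≤ card s`,
and `0` for `r > card s`. -/
noncomputable def QCl (c : ℕ → ℕ → R) (a : ℕ → R) (s : Finset σ) (r : ℤ) :
    MvPowerSeries σ R :=
  if r ≤ (s.card : ℤ) then
    ∑ k ∈ Finset.range (((s.card : ℤ) - r).toNat + 1),
      MvPowerSeries.C (σ := σ) (R := R) (a k) * PhiCl c s (r + (k : ℤ))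
  else 0

/-- The elementary symmetric power series in the variables `t_i`, `i ∈ s`. -/
noncomputable def esymmS (R : Type*) [CommRing R] (s : Finset σ) (r : ℕ) :
    MvPowerSeries σ R :=
  ∑ u ∈ s.powersetCard r, ∏ i ∈ u, MvPowerSeries.X i

/-- The coefficients of the formal group law `F(u,v) = u + v - a·uv` over `R = ℤ[a]`. -/
noncomputable def cFGL : ℕ → ℕ → Polynomial ℤ := fun i j =>
  if i = 1 ∧ j = 0 then 1
  else if i = 0 ∧ j = 1 then 1
  else if i = 1 ∧ j = 1 then -Polynomial.X
  else 0

/-- The coefficient sequence `a_0 = 1`, `a_1 = a`, `a_k = 0` for `k ≥ 2`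
(playing the role of `[ℂP^0], [ℂP^1], …` truncated, which is all that matters
in the given low-degree computation). -/
noncomputable def aFGL : ℕ → Polynomial ℤ := fun k =>
  if k = 0 then 1 else if k = 1 then Polynomial.X else 0

/-- Substitution `t_1 = t_2 = u` : `R⟦t_1, t_2⟧ → R⟦u⟧`. -/
noncomputable def diagSubst (φ : MvPowerSeries (Fin 2) (Polynomial ℤ)) :
    PowerSeries (Polynomial ℤ) :=
  PowerSeries.mk fun m => ∑ p ∈ Finset.HasAntidiagonal.antidiagonal m,
    MvPowerSeries.coeff (R := Polynomial ℤ) (Finsupp.single 0 p.1 + Finsupp.single 1 p.2) φ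

/-- Substitution `t_1 = u` : `R⟦t_1⟧ → R⟦u⟧`. -/
noncomputable def oneSubst (φ : MvPowerSeries (Fin 1) (Polynomial ℤ)) :
    PowerSeries (Polynomial ℤ) :=
  PowerSeries.mk fun m => MvPowerSeries.coeff (R := Polynomial ℤ) (Finsupp.single 0 m) φ

lemma coeff_Fser (c : ℕ → ℕ → R) (i : σ) (p : ℕ) (d : σ →₀ ℕ) :
    MvPowerSeries.coeff (R := R) d (PowerSeries.coeff p (Fser c i)) =
      if d = Finsupp.single i (d i) then c p (d i) else 0 := by
  rw [Fser]; erw [PowerSeries.coeff_mk]; rfl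

lemma Fser_cFGL (i : σ) :
    Fser (σ := σ) cFGL i = PowerSeries.C (MvPowerSeries.X i) +
      PowerSeries.X * PowerSeries.C
        (1 - MvPowerSeries.C (σ := σ) (R := Polynomial ℤ) Polynomial.X * MvPowerSeries.X i) := by
  apply PowerSeries.ext; intro p
  apply MvPowerSeries.ext; intro d
  rw [coeff_Fser]
  match p with
  | 0 =>
    simp only [map_add, PowerSeries.coeff_zero_eq_constantCoeff, map_mul,
      PowerSeries.constantCoeff_C, PowerSeries.constantCoeff_X, zero_mul, add_zero,
      MvPowerSeries.coeff_X]
    by_cases h1 : d = Finsupp.single i (d i)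
    · rw [if_pos h1]
      by_cases h2 : d i = 1
      · rw [h2] at h1 ⊢; rw [if_pos h1]; simp [cFGL]
      · rw [if_neg, show cFGL 0 (d i) = 0 by simp [cFGL, h2]]
        intro h; rw [h] at h2; simp at h2
    · rw [if_neg h1, if_neg]
      intro h; apply h1; rw [h]; simp
  | 1 =>
    have e1 : (PowerSeries.coeff (R := MvPowerSeries σ (Polynomial ℤ)) 1)
        (PowerSeries.X * PowerSeries.C
          (1 - MvPowerSeries.C (σ := σ) (R := Polynomial ℤ) Polynomial.X * MvPowerSeries.X i)) =
        1 - MvPowerSeries.C (σ := σ) (R := Polynomial ℤ) Polynomial.X * MvPowerSeries.X i := by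
      rw [show (1:ℕ) = 0 + 1 from rfl, PowerSeries.coeff_succ_X_mul,
        PowerSeries.coeff_zero_eq_constantCoeff, PowerSeries.constantCoeff_C]
    rw [map_add, e1, PowerSeries.coeff_C, if_neg one_ne_zero, zero_add, map_sub,
      MvPowerSeries.coeff_one, MvPowerSeries.coeff_C_mul, MvPowerSeries.coeff_X]
    by_cases h1 : d = Finsupp.single i (d i)
    · rw [if_pos h1]
      by_cases h2 : d i = 0
      · have hd0 : d = 0 := by rw [h1, h2]; simp
        rw [if_pos hd0, if_neg, h2]
        · simp [cFGL]
        · rw [hd0]; intro h; have := congrArg (fun f => f i) h.symm; simp at this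
      · by_cases h3 : d i = 1
        · rw [h3] at h1; rw [if_pos h1, if_neg, show cFGL 1 (d i) = -Polynomial.X by
            simp [cFGL, h3]]
          · ring
          · rw [h1]; intro h; have := congrArg (fun f => f i) h; simp at this
        · rw [if_neg, if_neg, show cFGL 1 (d i) = 0 by simp [cFGL, h2, h3]]
          · ring
          · intro h; rw [h] at h3; simp at h3
          · intro h; rw [h] at h2; simp at h2
    · rw [if_neg h1, if_neg, if_neg]
      · ring
      · intro h; apply h1; rw [h]; simp
      · intro h; apply h1; rw [h]; simp
  | (p+2) =>
    have e1 : (PowerSeries.coeff (R := MvPowerSeries σ (Polynomial ℤ)) (p+2))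
        (PowerSeries.X * PowerSeries.C
          (1 - MvPowerSeries.C (σ := σ) (R := Polynomial ℤ) Polynomial.X * MvPowerSeries.X i)) = 0 := by
      rw [show p + 2 = (p+1) + 1 from rfl, PowerSeries.coeff_succ_X_mul,
        PowerSeries.coeff_C, if_neg (Nat.succ_ne_zero p)]
    rw [map_add, e1, PowerSeries.coeff_C, if_neg (Nat.succ_ne_zero (p+1)),
      show cFGL (p+2) (d i) = 0 from by simp [cFGL]]
    simp

lemma coeff_zero_aux {A : Type*} [CommRing A] (c0 c1 c2 : A) :
    PowerSeries.coeff (R := A) 0 (PowerSeries.C (R := A) c0 + PowerSeries.X * PowerSeries.C (R := A) c1 +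
      PowerSeries.X ^ 2 * PowerSeries.C (R := A) c2) = c0 := by
  simp [PowerSeries.coeff_zero_eq_constantCoeff, map_add, map_mul]

lemma coeff_one_aux {A : Type*} [CommRing A] (c0 c1 c2 : A) :
    PowerSeries.coeff (R := A) 1 (PowerSeries.C (R := A) c0 + PowerSeries.X * PowerSeries.C (R := A) c1 +
      PowerSeries.X ^ 2 * PowerSeries.C (R := A) c2) = c1 := by
  rw [map_add, map_add, PowerSeries.coeff_C, if_neg one_ne_zero, sq, mul_assoc,
    show (1:ℕ) = 0 + 1 from rfl, PowerSeries.coeff_succ_X_mul, PowerSeries.coeff_succ_X_mul,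
    PowerSeries.coeff_zero_eq_constantCoeff, PowerSeries.constantCoeff_C]
  simp [PowerSeries.coeff_zero_eq_constantCoeff, map_mul]

lemma prod2 :
    ∏ i ∈ (Finset.univ : Finset (Fin 2)), Fser cFGL i =
      PowerSeries.C (MvPowerSeries.X 0 * MvPowerSeries.X 1) +
      PowerSeries.X * PowerSeries.C
        (MvPowerSeries.X 0 * (1 - MvPowerSeries.C (σ := Fin 2) (R := Polynomial ℤ) Polynomial.X * MvPowerSeries.X 1)
          + (1 - MvPowerSeries.C (σ := Fin 2) (R := Polynomial ℤ) Polynomial.X * MvPowerSeries.X 0) * MvPowerSeries.X 1) +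
      PowerSeries.X ^ 2 * PowerSeries.C
        ((1 - MvPowerSeries.C (σ := Fin 2) (R := Polynomial ℤ) Polynomial.X * MvPowerSeries.X 0)
          * (1 - MvPowerSeries.C (σ := Fin 2) (R := Polynomial ℤ) Polynomial.X * MvPowerSeries.X 1)) := by
  rw [Fin.prod_univ_two, Fser_cFGL 0, Fser_cFGL 1]
  simp only [map_mul, map_add, map_sub, map_one]
  ring

lemma card2 : ((Finset.univ : Finset (Fin 2)).card : ℤ) = 2 := by simp
lemma card1 : ((Finset.univ : Finset (Fin 1)).card : ℤ) = 1 := by simp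

lemma Phi2_2 : PhiCl cFGL (Finset.univ : Finset (Fin 2)) 2 =
    MvPowerSeries.X 0 * MvPowerSeries.X 1 := by
  rw [PhiCl, if_pos (by rw [card2]), card2, show ((2:ℤ) - 2).toNat = 0 by decide, prod2,
    coeff_zero_aux]

lemma Phi2_1 : PhiCl cFGL (Finset.univ : Finset (Fin 2)) 1 =
    MvPowerSeries.X 0 * (1 - MvPowerSeries.C (σ := Fin 2) (R := Polynomial ℤ) Polynomial.X * MvPowerSeries.X 1)
      + (1 - MvPowerSeries.C (σ := Fin 2) (R := Polynomial ℤ) Polynomial.X * MvPowerSeries.X 0) * MvPowerSeries.X 1 := by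
  rw [PhiCl, if_pos (by rw [card2]; norm_num), card2, show ((2:ℤ) - 1).toNat = 1 by decide,
    prod2, coeff_one_aux]

lemma Q2_1 : QCl cFGL aFGL (Finset.univ : Finset (Fin 2)) 1 =
    MvPowerSeries.X 0 + MvPowerSeries.X 1
      - MvPowerSeries.C (σ := Fin 2) (R := Polynomial ℤ) Polynomial.X
        * (MvPowerSeries.X 0 * MvPowerSeries.X 1) := by
  rw [QCl, if_pos (by rw [card2]; norm_num), card2, show ((2:ℤ) - 1).toNat = 1 by decide]
  rw [Finset.sum_range_succ, Finset.sum_range_one]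
  simp only [Nat.cast_zero, Nat.cast_one, add_zero]
  rw [Phi2_1, show ((1:ℤ) + 1) = 2 by norm_num, Phi2_2,
    show aFGL 0 = 1 by simp [aFGL], show aFGL 1 = Polynomial.X by simp [aFGL]]
  simp only [map_one]
  ring

lemma prod1 :
    ∏ i ∈ (Finset.univ : Finset (Fin 1)), Fser cFGL i =
      PowerSeries.C (MvPowerSeries.X 0) +
      PowerSeries.X * PowerSeries.C
        (1 - MvPowerSeries.C (σ := Fin 1) (R := Polynomial ℤ) Polynomial.X * MvPowerSeries.X 0) +
      PowerSeries.X ^ 2 * PowerSeries.C 0 := by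
  rw [Fin.prod_univ_one, Fser_cFGL 0]
  simp

lemma Phi1_1 : PhiCl cFGL (Finset.univ : Finset (Fin 1)) 1 = MvPowerSeries.X 0 := by
  rw [PhiCl, if_pos (by rw [card1]), card1, show ((1:ℤ) - 1).toNat = 0 by decide, prod1,
    coeff_zero_aux]

lemma Phi1_0 : PhiCl cFGL (Finset.univ : Finset (Fin 1)) 0 =
    1 - MvPowerSeries.C (σ := Fin 1) (R := Polynomial ℤ) Polynomial.X * MvPowerSeries.X 0 := by
  rw [PhiCl, if_pos (by rw [card1]; norm_num), card1, show ((1:ℤ) - 0).toNat = 1 by decide,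
    prod1, coeff_one_aux]

lemma Q1_1 : QCl cFGL aFGL (Finset.univ : Finset (Fin 1)) 1 = MvPowerSeries.X 0 := by
  rw [QCl, if_pos (by rw [card1]), card1, show ((1:ℤ) - 1).toNat = 0 by decide]
  rw [Finset.sum_range_one]
  simp only [Nat.cast_zero, add_zero]
  rw [Phi1_1, show aFGL 0 = 1 by simp [aFGL]]
  simp

lemma Q1_0 : QCl cFGL aFGL (Finset.univ : Finset (Fin 1)) 0 = 1 := by
  rw [QCl, if_pos (by rw [card1]; norm_num), card1, show ((1:ℤ) - 0).toNat = 1 by decide]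
  rw [Finset.sum_range_succ, Finset.sum_range_one]
  simp only [Nat.cast_zero, Nat.cast_one, add_zero]
  rw [Phi1_0, show ((0:ℤ) + 1) = 1 by norm_num, Phi1_1,
    show aFGL 0 = 1 by simp [aFGL], show aFGL 1 = Polynomial.X by simp [aFGL]]
  simp only [map_one]
  ring

lemma fin2_finsupp_eq (d : Fin 2 →₀ ℕ) :
    Finsupp.single 0 (d 0) + Finsupp.single 1 (d 1) = d := by
  ext x; fin_cases x <;> simp [Finsupp.single_apply]

lemma diag_key (d : Fin 2 →₀ ℕ) (pq : ℕ × ℕ) :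
    (Finsupp.single 0 pq.1 + Finsupp.single 1 pq.2 = d) ↔ pq = (d 0, d 1) := by
  constructor
  · intro h
    have h0 := congrArg (fun f => f (0 : Fin 2)) h
    have h1 := congrArg (fun f => f (1 : Fin 2)) h
    simp [Finsupp.single_apply] at h0 h1
    exact Prod.ext h0 h1
  · rintro rfl
    exact fin2_finsupp_eq d

lemma diagSubst_monomial (d : Fin 2 →₀ ℕ) (c : Polynomial ℤ) :
    diagSubst (MvPowerSeries.monomial (R := Polynomial ℤ) d c) =
      PowerSeries.monomial (R := Polynomial ℤ) (d 0 + d 1) c := by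
  apply PowerSeries.ext; intro m
  rw [diagSubst, PowerSeries.coeff_mk, PowerSeries.coeff_monomial]
  calc ∑ pq ∈ Finset.HasAntidiagonal.antidiagonal m,
      MvPowerSeries.coeff (Finsupp.single 0 pq.1 + Finsupp.single 1 pq.2)
        (MvPowerSeries.monomial (R := Polynomial ℤ) d c)
      = ∑ pq ∈ Finset.HasAntidiagonal.antidiagonal m, if pq = (d 0, d 1) then c else 0 := by
        refine Finset.sum_congr rfl fun pq _ => ?_
        rw [MvPowerSeries.coeff_monomial]
        simp [diag_key d pq]
    _ = if (d 0, d 1) ∈ Finset.HasAntidiagonal.antidiagonal m then c else 0 := Finset.sum_ite_eq' _ _ _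
    _ = if m = d 0 + d 1 then c else 0 := by simp [Finset.mem_antidiagonal, eq_comm]

lemma oneSubst_monomial (d : Fin 1 →₀ ℕ) (c : Polynomial ℤ) :
    oneSubst (MvPowerSeries.monomial (R := Polynomial ℤ) d c) = PowerSeries.monomial (R := Polynomial ℤ) (d 0) c := by
  apply PowerSeries.ext; intro m
  rw [oneSubst, PowerSeries.coeff_mk, MvPowerSeries.coeff_monomial,
    PowerSeries.coeff_monomial]
  congr 1
  have key : (Finsupp.single (0 : Fin 1) m = d) ↔ m = d 0 := by
    constructor
    · intro h; have := congrArg (fun f => f (0 : Fin 1)) h; simpa using this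
    · rintro rfl; apply Finsupp.ext; intro x; fin_cases x; simp
  simp [key]

lemma diagSubst_add (φ ψ : MvPowerSeries (Fin 2) (Polynomial ℤ)) :
    diagSubst (φ + ψ) = diagSubst φ + diagSubst ψ := by
  apply PowerSeries.ext; intro m
  simp [diagSubst, Finset.sum_add_distrib]

lemma diagSubst_sub (φ ψ : MvPowerSeries (Fin 2) (Polynomial ℤ)) :
    diagSubst (φ - ψ) = diagSubst φ - diagSubst ψ := by
  apply PowerSeries.ext; intro m
  simp [diagSubst, Finset.sum_sub_distrib]

lemma main1 : diagSubst (QCl cFGL aFGL (Finset.univ : Finset (Fin 2)) 1) =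
    2 * PowerSeries.X - PowerSeries.C (R := Polynomial ℤ) Polynomial.X * PowerSeries.X ^ 2 := by
  rw [Q2_1]
  have hx0 : (MvPowerSeries.X 0 : MvPowerSeries (Fin 2) (Polynomial ℤ)) =
      MvPowerSeries.monomial (R := Polynomial ℤ) (Finsupp.single 0 1) 1 := MvPowerSeries.X_def 0
  have hx1 : (MvPowerSeries.X 1 : MvPowerSeries (Fin 2) (Polynomial ℤ)) =
      MvPowerSeries.monomial (R := Polynomial ℤ) (Finsupp.single 1 1) 1 := MvPowerSeries.X_def 1
  have hc : (MvPowerSeries.C (σ := Fin 2) (R := Polynomial ℤ)) Polynomial.X *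
      (MvPowerSeries.X 0 * MvPowerSeries.X 1) =
      MvPowerSeries.monomial (R := Polynomial ℤ) (Finsupp.single 0 1 + Finsupp.single 1 1) Polynomial.X := by
    rw [hx0, hx1, MvPowerSeries.monomial_mul_monomial,
      ← MvPowerSeries.monomial_zero_eq_C_apply, MvPowerSeries.monomial_mul_monomial]
    simp
  rw [hc, hx0, hx1, diagSubst_sub, diagSubst_add, diagSubst_monomial,
    diagSubst_monomial, diagSubst_monomial]
  simp [Finsupp.single_apply]
  rw [← PowerSeries.X_eq, show (PowerSeries.monomial (R := Polynomial ℤ) 2) Polynomial.X =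
    PowerSeries.C (R := Polynomial ℤ) Polynomial.X * PowerSeries.X ^ 2 by
      apply PowerSeries.ext; intro m
      rw [PowerSeries.coeff_monomial, PowerSeries.coeff_C_mul_X_pow]]
  ring

lemma main2 : oneSubst (QCl cFGL aFGL (Finset.univ : Finset (Fin 1)) 1) = PowerSeries.X := by
  rw [Q1_1, MvPowerSeries.X_def, oneSubst_monomial]
  simp [PowerSeries.X_eq]

lemma main3 : oneSubst (QCl cFGL aFGL (Finset.univ : Finset (Fin 1)) 0) = 1 := by
  rw [Q1_0, show (1 : MvPowerSeries (Fin 1) (Polynomial ℤ)) =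
    MvPowerSeries.monomial (R := Polynomial ℤ) 0 1 by simp, oneSubst_monomial]
  simp

/-- **Failure of the ordinary Whitney sum formula for the classes `Q`**
(Theorem 4.2(5) and the counterexample of Section 5). Over `R = ℤ[a]` with
`F(u,v) = u + v - a·uv`, `a_0 = 1`, `a_1 = a`, one has, in `R⟦u⟧`:
`Q_1(u, u) = 2u - a·u²`, `Q_1(u) = u`, `Q_0(u) = 1`, and consequently
`Q_1(u, u) ≠ Q_1(u)·Q_0(u) + Q_0(u)·Q_1(u) = 2u`; hence the classes `Q_r` do not
satisfy the Whitney sum formula. -/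
theorem Q_whitney_fails :
    diagSubst (QCl cFGL aFGL (Finset.univ : Finset (Fin 2)) 1) =
        2 * PowerSeries.X - PowerSeries.C (R := Polynomial ℤ) Polynomial.X * PowerSeries.X ^ 2 ∧
      oneSubst (QCl cFGL aFGL (Finset.univ : Finset (Fin 1)) 1) = PowerSeries.X ∧
      oneSubst (QCl cFGL aFGL (Finset.univ : Finset (Fin 1)) 0) = 1 ∧
      diagSubst (QCl cFGL aFGL (Finset.univ : Finset (Fin 2)) 1) ≠
        oneSubst (QCl cFGL aFGL (Finset.univ : Finset (Fin 1)) 1) *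
            oneSubst (QCl cFGL aFGL (Finset.univ : Finset (Fin 1)) 0) +
          oneSubst (QCl cFGL aFGL (Finset.univ : Finset (Fin 1)) 0) *
            oneSubst (QCl cFGL aFGL (Finset.univ : Finset (Fin 1)) 1) := by
  refine ⟨main1, main2, main3, ?_⟩
  rw [main1, main2, main3]
  intro h
  have h2 := congrArg (PowerSeries.coeff (R := Polynomial ℤ) 2) h
  simp [two_mul, PowerSeries.coeff_C_mul_X_pow, PowerSeries.coeff_X] at h2
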